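/- The matrix equivalence relation A ∼ B, defined by existence of identities I_α, I_β with A⊗I_α = B⊗I_β, is preserved by the semi-tensor product: if A ∼ A' and B ∼ B', then A⋉B ∼ A'⋉B'. -/

import Mathlib

open Matrix Kronecker

noncomputable section

/-- `A ⊗ I_s`, reindexed to `Fin (m*s) × Fin (n*s)` index types. -/
def mkron {m n : ℕ} (A : Matrix (Fin m) (Fin n) ℝ) (s : ℕ) :
    Matrix (Fin (m * s)) (Fin (n * s)) ℝ :=
  Matrix.reindex finProdFinEquiv finProdFinEquiv
    (Matrix.kroneckerMap (· * ·) A (1 : Matrix (Fin s) (Fin s) ℝ))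

/-- `x ⊗ 1_s`: each entry of `x` repeated `s` times (Kronecker with the all-ones vector). -/
def vkron {r : ℕ} (x : Fin r → ℝ) (s : ℕ) : Fin (r * s) → ℝ :=
  fun i => x (finProdFinEquiv.symm i).1

/-- The semi-tensor (M-) product `A ⋉ B = (A ⊗ I_{t/n})(B ⊗ I_{t/p})`, `t = lcm n p`. -/
def stp {m n p q : ℕ} (A : Matrix (Fin m) (Fin n) ℝ) (B : Matrix (Fin p) (Fin q) ℝ) :
    Matrix (Fin (m * (Nat.lcm n p / n))) (Fin (q * (Nat.lcm n p / p))) ℝ :=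
  mkron A (Nat.lcm n p / n) *
    (mkron B (Nat.lcm n p / p)).submatrix
      (Fin.cast (by
        rw [Nat.mul_div_cancel' (Nat.dvd_lcm_left n p),
          Nat.mul_div_cancel' (Nat.dvd_lcm_right n p)])) id

/-- The vector (V-) product `A ⋉_V x = (A ⊗ I_{t/n})(x ⊗ 1_{t/r})`, `t = lcm n r`. -/
def vprod {m n r : ℕ} (A : Matrix (Fin m) (Fin n) ℝ) (x : Fin r → ℝ) :
    Fin (m * (Nat.lcm n r / n)) → ℝ :=
  (mkron A (Nat.lcm n r / n)).mulVec fun j =>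
    vkron x (Nat.lcm n r / r)
      (Fin.cast (by
        rw [Nat.mul_div_cancel' (Nat.dvd_lcm_left n r),
          Nat.mul_div_cancel' (Nat.dvd_lcm_right n r)]) j)

/-- V-addition `x ⊞ y = (x ⊗ 1_{t/m}) + (y ⊗ 1_{t/n})`, `t = lcm m n`. -/
def vadd2 {m n : ℕ} (x : Fin m → ℝ) (y : Fin n → ℝ) : Fin (Nat.lcm m n) → ℝ :=
  fun i =>
    vkron x (Nat.lcm m n / m) (Fin.cast (Nat.mul_div_cancel' (Nat.dvd_lcm_left m n)).symm i) +
    vkron y (Nat.lcm m n / n) (Fin.cast (Nat.mul_div_cancel' (Nat.dvd_lcm_right m n)).symm i)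

/-- V-subtraction `x ⊟ y = (x ⊗ 1_{t/m}) - (y ⊗ 1_{t/n})`, `t = lcm m n`. -/
def vsub2 {m n : ℕ} (x : Fin m → ℝ) (y : Fin n → ℝ) : Fin (Nat.lcm m n) → ℝ :=
  fun i =>
    vkron x (Nat.lcm m n / m) (Fin.cast (Nat.mul_div_cancel' (Nat.dvd_lcm_left m n)).symm i) -
    vkron y (Nat.lcm m n / n) (Fin.cast (Nat.mul_div_cancel' (Nat.dvd_lcm_right m n)).symm i)

/-- The dimension-normalized norm `‖x‖_V = sqrt((1/k) ∑ xᵢ²)`. -/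
def vnorm {k : ℕ} (x : Fin k → ℝ) : ℝ :=
  Real.sqrt ((∑ i, x i ^ 2) / k)

/-- The dimension-free inner product `⟨x,y⟩_V = (1/t)⟨x⊗1_{t/m}, y⊗1_{t/n}⟩`. -/
def vinner {m n : ℕ} (x : Fin m → ℝ) (y : Fin n → ℝ) : ℝ :=
  (∑ i : Fin (Nat.lcm m n),
      vkron x (Nat.lcm m n / m) (Fin.cast (Nat.mul_div_cancel' (Nat.dvd_lcm_left m n)).symm i) *
      vkron y (Nat.lcm m n / n)
        (Fin.cast (Nat.mul_div_cancel' (Nat.dvd_lcm_right m n)).symm i)) /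
    (Nat.lcm m n)

/-- The dimension-free distance `d(x,y) = ‖x ⊟ y‖_V`. -/
def vdist {m n : ℕ} (x : Fin m → ℝ) (y : Fin n → ℝ) : ℝ := vnorm (vsub2 x y)

/-- The spectral norm `‖A‖ = sqrt(σ_max(AᵀA))` (largest eigenvalue of `AᵀA = AᴴA` over `ℝ`). -/
def specNorm {m n : ℕ} (A : Matrix (Fin m) (Fin n) ℝ) : ℝ :=
  Real.sqrt (⨆ i, (Matrix.isHermitian_conjTranspose_mul_self A).eigenvalues i)

/-- Vector equivalence: `x ↔ y` iff `x ⊗ 1_α = y ⊗ 1_β` for some `α, β ≥ 1`. -/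
def VEquiv {m n : ℕ} (x : Fin m → ℝ) (y : Fin n → ℝ) : Prop :=
  ∃ (α β : ℕ), 0 < α ∧ 0 < β ∧
    ∃ h : m * α = n * β, ∀ i, vkron x α i = vkron y β (Fin.cast h i)

/-- Matrix equivalence: `A ∼ B` iff `A ⊗ I_α = B ⊗ I_β` for some `α, β ≥ 1`. -/
def MEquiv {m n p q : ℕ} (A : Matrix (Fin m) (Fin n) ℝ) (B : Matrix (Fin p) (Fin q) ℝ) : Prop :=
  ∃ (α β : ℕ), 0 < α ∧ 0 < β ∧
    ∃ (h1 : m * α = p * β) (h2 : n * α = q * β),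
      ∀ i j, mkron A α i j = mkron B β (Fin.cast h1 i) (Fin.cast h2 j)

/-- `R^r` is `A`-invariant: `A ⋉_V x ∈ R^r` for every `x ∈ R^r`. -/
def AInvariant {m n : ℕ} (A : Matrix (Fin m) (Fin n) ℝ) (r : ℕ) : Prop :=
  ∀ x : Fin r → ℝ, ∃ y : Fin r → ℝ,
    (⟨_, vprod A x⟩ : Σ k : ℕ, Fin k → ℝ) = ⟨r, y⟩

lemma mkron_apply {m n s : ℕ} (A : Matrix (Fin m) (Fin n) ℝ) (i : Fin (m*s)) (j : Fin (n*s)) :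
    mkron A s i j = A i.divNat j.divNat * (if (i:ℕ) % s = (j:ℕ) % s then 1 else 0) := by
  simp [mkron, Matrix.one_apply, Fin.ext_iff, Fin.coe_modNat, Matrix.kroneckerMap]
  split_ifs <;> simp_all

lemma mkron_mul {m n q s : ℕ} (M : Matrix (Fin m) (Fin n) ℝ) (N : Matrix (Fin n) (Fin q) ℝ) :
    mkron (M * N) s = mkron M s * mkron N s := by
  unfold mkron
  simp only [Matrix.reindex_apply]
  rw [Matrix.submatrix_mul_equiv _ _ _ finProdFinEquiv.symm _, ← Matrix.mul_kronecker_mul,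
    Matrix.one_mul]

lemma mod_mul_eq_iff {c : ℕ} (hc : 0 < c) (a x y : ℕ) :
    x % (a * c) = y % (a * c) ↔ (x / c % a = y / c % a ∧ x % c = y % c) := by
  rw [mul_comm a c, Nat.mod_mul, Nat.mod_mul]
  constructor
  · intro h
    have h2 : x % c = y % c := by
      have := congrArg (· % c) h
      simpa [Nat.add_mul_mod_self_left] using this
    rw [h2] at h
    exact ⟨Nat.eq_of_mul_eq_mul_left hc (Nat.add_left_cancel h), h2⟩
  · rintro ⟨h1, h2⟩
    rw [h1, h2]

lemma mkron_val_congr {m n s : ℕ} (A : Matrix (Fin m) (Fin n) ℝ) {i i' : Fin (m*s)}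
    {j j' : Fin (n*s)} (hi : (i:ℕ) = i') (hj : (j:ℕ) = j') :
    mkron A s i j = mkron A s i' j' := by
  obtain rfl := Fin.ext hi; obtain rfl := Fin.ext hj; rfl

lemma mkron_mkron {m n a c : ℕ} (hc : 0 < c) (A : Matrix (Fin m) (Fin n) ℝ)
    (i : Fin (m*(a*c))) (j : Fin (n*(a*c))) :
    mkron A (a*c) i j = mkron (mkron A a) c
      (Fin.cast (mul_assoc m a c).symm i) (Fin.cast (mul_assoc n a c).symm j) := by
  rw [mkron_apply, mkron_apply, mkron_apply]
  have hW : i.divNat = ((Fin.cast (mul_assoc m a c).symm i).divNat).divNat := by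
    apply Fin.ext
    simp [Fin.coe_divNat, Nat.div_div_eq_div_mul, mul_comm c a]
  have hZ : j.divNat = ((Fin.cast (mul_assoc n a c).symm j).divNat).divNat := by
    apply Fin.ext
    simp [Fin.coe_divNat, Nat.div_div_eq_div_mul, mul_comm c a]
  rw [← hW, ← hZ]
  simp only [Fin.coe_divNat, Fin.coe_cast]
  simp only [mod_mul_eq_iff hc]
  by_cases h1 : (i:ℕ) / c % a = (j:ℕ) / c % a <;> by_cases h2 : (i:ℕ) % c = (j:ℕ) % c <;>
    simp [h1, h2]

lemma mkron_congr {m n m' n' : ℕ} (h1 : m = m') (h2 : n = n')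
    (C : Matrix (Fin m) (Fin n) ℝ) (C' : Matrix (Fin m') (Fin n') ℝ)
    (hC : ∀ i j, C i j = C' (Fin.cast h1 i) (Fin.cast h2 j)) (u : ℕ)
    (i : Fin (m*u)) (j : Fin (n*u)) :
    mkron C u i j = mkron C' u (Fin.cast (by rw [h1]) i) (Fin.cast (by rw [h2]) j) := by
  subst h1; subst h2
  simp only [Fin.cast_refl, id]
  rw [mkron_apply, mkron_apply]
  rw [hC]
  simp [Fin.cast_refl]

lemma mequiv_piece {m n m' n' a a' : ℕ} (A : Matrix (Fin m) (Fin n) ℝ)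
    (A' : Matrix (Fin m') (Fin n') ℝ)
    (h1 : m * a = m' * a') (h2 : n * a = n' * a')
    (hAA : ∀ i j, mkron A a i j = mkron A' a' (Fin.cast h1 i) (Fin.cast h2 j))
    (c : ℕ) (hc : 0 < c) {sa sa' : ℕ} (hsa : sa = a * c) (hsa' : sa' = a' * c)
    (i : Fin (m * sa)) (j : Fin (n * sa)) (i' : Fin (m' * sa')) (j' : Fin (n' * sa'))
    (hi : (i:ℕ) = (i':ℕ)) (hj : (j:ℕ) = (j':ℕ)) :
    mkron A sa i j = mkron A' sa' i' j' := by
  subst hsa; subst hsa'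
  rw [mkron_mkron hc A i j, mkron_mkron hc A' i' j']
  rw [mkron_congr h1 h2 (mkron A a) (mkron A' a') hAA c]
  exact mkron_val_congr _ (by simp [hi]) (by simp [hj])

lemma mkron_mkron' {m n a c : ℕ} (hc : 0 < c) (A : Matrix (Fin m) (Fin n) ℝ)
    (i : Fin (m*a*c)) (j : Fin (n*a*c)) :
    mkron (mkron A a) c i j = mkron A (a*c)
      (Fin.cast (mul_assoc m a c) i) (Fin.cast (mul_assoc n a c) j) := by
  rw [mkron_mkron hc A (Fin.cast (mul_assoc m a c) i) (Fin.cast (mul_assoc n a c) j)]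
  exact mkron_val_congr _ rfl rfl

lemma mkron_submatrix_cast {p q pp : ℕ} (h : pp = p) (C : Matrix (Fin p) (Fin q) ℝ) (γ : ℕ)
    (k : Fin (pp*γ)) (j : Fin (q*γ)) :
    mkron (C.submatrix (Fin.cast h) id) γ k j = mkron C γ (Fin.cast (by rw [h]) k) j := by
  subst h
  simp [Fin.cast_refl, Matrix.submatrix_id_id]

lemma stp_kron_apply {m n p q : ℕ} (A : Matrix (Fin m) (Fin n) ℝ)
    (B : Matrix (Fin p) (Fin q) ℝ) (γ : ℕ) (hγ : 0 < γ)
    (i : Fin (m * (Nat.lcm n p / n) * γ)) (j : Fin (q * (Nat.lcm n p / p) * γ)) :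
    mkron (stp A B) γ i j =
      ∑ k : Fin (n * (Nat.lcm n p / n) * γ),
        mkron A (Nat.lcm n p / n * γ)
            (Fin.cast (mul_assoc _ _ _) i) (Fin.cast (mul_assoc _ _ _) k) *
        mkron B (Nat.lcm n p / p * γ)
            (Fin.cast (by rw [Nat.mul_div_cancel' (Nat.dvd_lcm_left n p), ← mul_assoc,
              Nat.mul_div_cancel' (Nat.dvd_lcm_right n p)]) k)
            (Fin.cast (mul_assoc _ _ _) j) := by
  rw [stp]
  erw [mkron_mul, Matrix.mul_apply]
  refine Finset.sum_congr rfl fun k _ => ?_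
  rw [mkron_mkron' hγ, mkron_submatrix_cast, mkron_mkron' hγ]
  refine congrArg₂ (· * ·) rfl (mkron_val_congr _ rfl rfl)

/-- matrix equivalence is preserved by the semi-tensor product. -/
theorem stp_respects_mequiv {m n m' n' p q p' q' : ℕ}
    (hm : 0 < m) (hn : 0 < n) (hm' : 0 < m') (hn' : 0 < n')
    (hp : 0 < p) (hq : 0 < q) (hp' : 0 < p') (hq' : 0 < q')
    (A : Matrix (Fin m) (Fin n) ℝ) (A' : Matrix (Fin m') (Fin n') ℝ)
    (B : Matrix (Fin p) (Fin q) ℝ) (B' : Matrix (Fin p') (Fin q') ℝ)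
    (hA : MEquiv A A') (hB : MEquiv B B') :
    MEquiv (stp A B) (stp A' B') := by
  obtain ⟨a, a', ha, ha', hma, hna, hAA⟩ := hA
  obtain ⟨b, b', hb, hb', hpb, hqb, hBB⟩ := hB
  set s := Nat.lcm n p / n with hs_def
  set u := Nat.lcm n p / p with hu_def
  set s' := Nat.lcm n' p' / n' with hs'_def
  set u' := Nat.lcm n' p' / p' with hu'_def
  have hns : n * s = Nat.lcm n p := Nat.mul_div_cancel' (Nat.dvd_lcm_left n p)
  have hpu : p * u = Nat.lcm n p := Nat.mul_div_cancel' (Nat.dvd_lcm_right n p)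
  have hn's' : n' * s' = Nat.lcm n' p' := Nat.mul_div_cancel' (Nat.dvd_lcm_left n' p')
  have hp'u' : p' * u' = Nat.lcm n' p' := Nat.mul_div_cancel' (Nat.dvd_lcm_right n' p')
  have hpu2 : p * u = n * s := by rw [hpu, hns]
  have hp'u'2 : p' * u' = n' * s' := by rw [hp'u', hn's']
  have hlcm : 0 < Nat.lcm n p := Nat.lcm_pos hn hp
  have hlcm' : 0 < Nat.lcm n' p' := Nat.lcm_pos hn' hp'
  have hs : 0 < s := Nat.pos_of_ne_zero fun h => by rw [h, Nat.mul_zero] at hns; omega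
  have hu : 0 < u := Nat.pos_of_ne_zero fun h => by rw [h, Nat.mul_zero] at hpu; omega
  have hs' : 0 < s' := Nat.pos_of_ne_zero fun h => by rw [h, Nat.mul_zero] at hn's'; omega
  have hu' : 0 < u' := Nat.pos_of_ne_zero fun h => by rw [h, Nat.mul_zero] at hp'u'; omega
  have hsγ : s * ((n' * s') * ((n * a) * (p * b))) = a * ((n * s) * ((n' * s') * (p * b))) := by
    ring
  have huγ : u * ((n' * s') * ((n * a) * (p * b))) = b * ((n * s) * ((n' * s') * (n * a))) := by
    calc u * ((n' * s') * ((n * a) * (p * b))) = (p * u) * ((n' * s') * (n * a) * b) := by ring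
      _ = (n * s) * ((n' * s') * (n * a) * b) := by rw [hpu2]
      _ = b * ((n * s) * ((n' * s') * (n * a))) := by ring
  have hs'γ' : s' * ((n * s) * ((n * a) * (p * b))) = a' * ((n * s) * ((n' * s') * (p * b))) := by
    calc s' * ((n * s) * ((n * a) * (p * b))) = (n * a) * (s' * (n * s) * (p * b)) := by ring
      _ = (n' * a') * (s' * (n * s) * (p * b)) := by rw [hna]
      _ = a' * ((n * s) * ((n' * s') * (p * b))) := by ring
  have hu'γ' : u' * ((n * s) * ((n * a) * (p * b))) = b' * ((n * s) * ((n' * s') * (n * a))) := by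
    calc u' * ((n * s) * ((n * a) * (p * b))) = (p * b) * (u' * (n * s) * (n * a)) := by ring
      _ = (p' * b') * (u' * (n * s) * (n * a)) := by rw [hpb]
      _ = (p' * u') * ((n * s) * (n * a) * b') := by ring
      _ = (n' * s') * ((n * s) * (n * a) * b') := by rw [hp'u'2]
      _ = b' * ((n * s) * ((n' * s') * (n * a))) := by ring
  have hcpos : 0 < (n * s) * ((n' * s') * (p * b)) := by positivity
  have hdpos : 0 < (n * s) * ((n' * s') * (n * a)) := by positivity
  refine ⟨(n' * s') * ((n * a) * (p * b)), (n * s) * ((n * a) * (p * b)), by positivity,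
    by positivity,
    by show m * s * ((n' * s') * ((n * a) * (p * b))) = m' * s' * ((n * s) * ((n * a) * (p * b)))
       rw [mul_assoc, hsγ, ← mul_assoc, hma, mul_assoc, ← hs'γ', ← mul_assoc],
    by show q * u * ((n' * s') * ((n * a) * (p * b))) = q' * u' * ((n * s) * ((n * a) * (p * b)))
       rw [mul_assoc, huγ, ← mul_assoc, hqb, mul_assoc, ← hu'γ', ← mul_assoc], fun i j => ?_⟩
  rw [stp_kron_apply A B _ (by positivity) i j,
    stp_kron_apply A' B' _ (by positivity)]
  refine Fintype.sum_equiv (finCongr (show n * s * ((n' * s') * ((n * a) * (p * b)))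
    = n' * s' * ((n * s) * ((n * a) * (p * b))) by ring)) _ _ fun k => ?_
  refine congrArg₂ (· * ·) ?_ ?_
  · exact mequiv_piece A A' hma hna hAA _ hcpos hsγ hs'γ' _ _ _ _ rfl rfl
  · exact mequiv_piece B B' hpb hqb hBB _ hdpos huγ hu'γ' _ _ _ _ rfl rfl
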